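/- Let r>0. Let g:(0,r]→ℝ be continuous and non-increasing, with s ↦ s·g(s) integrable on (0,r) and ∫₀^r s·g(s) ds ≥ 0. Let h:[0,r]→[0,∞) be measurable with h(0)=0, with h and h·|g| integrable on (0,r), and subadditive in the sense that h(s₁)+h(s₂) ≥ h(s₁+s₂) for all s₁,s₂>0 with s₁+s₂<r. Then ∫₀^r h(s)·g(s) ds ≥ 0. -/

import Mathlib

open MeasureTheory Set

open Filter Topology

lemma key_A (r : ℝ) (h : ℝ → ℝ)
    (hh_int : IntegrableOn h (Ioo 0 r))
    (hh_subadd : ∀ s₁ s₂ : ℝ, 0 < s₁ → 0 < s₂ → s₁ + s₂ < r →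
      h (s₁ + s₂) ≤ h s₁ + h s₂) :
    ∀ t ∈ Ioo (0:ℝ) r, t * h t ≤ 2 * ∫ s in Ioo 0 t, h s := by
  intro t ht
  obtain ⟨ht0, htr⟩ := ht
  have hsub : Ioo (0:ℝ) t ⊆ Ioo 0 r := Ioo_subset_Ioo le_rfl htr.le
  have hint : IntegrableOn h (Ioo 0 t) := hh_int.mono_set hsub
  have hii : IntervalIntegrable h volume 0 t := by
    rw [intervalIntegrable_iff_integrableOn_Ioo_of_le ht0.le]; exact hint
  have hrefl : (∫ s in Ioo (0:ℝ) t, h (t - s)) = ∫ s in Ioo (0:ℝ) t, h s := by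
    rw [← integral_Ioc_eq_integral_Ioo, ← integral_Ioc_eq_integral_Ioo,
      ← intervalIntegral.integral_of_le ht0.le, ← intervalIntegral.integral_of_le ht0.le]
    simpa using intervalIntegral.integral_comp_sub_left h t
  have hreflint : IntegrableOn (fun s => h (t - s)) (Ioo 0 t) := by
    have := (hii.comp_sub_left t).symm
    rw [sub_zero, sub_self, intervalIntegrable_iff_integrableOn_Ioo_of_le ht0.le] at this
    exact this
  have hmono : (∫ s in Ioo (0:ℝ) t, h t) ≤ ∫ s in Ioo (0:ℝ) t, (h s + h (t - s)) := by
    apply setIntegral_mono_on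
      (integrableOn_const measure_Ioo_lt_top.ne)
      (hint.add hreflint) measurableSet_Ioo
    intro s hs
    have := hh_subadd s (t - s) hs.1 (by linarith [hs.2]) (by linarith)
    simpa [add_sub_cancel] using this
  have hconst : (∫ s in Ioo (0:ℝ) t, h t) = t * h t := by
    rw [setIntegral_const, measureReal_def, Real.volume_Ioo, smul_eq_mul, sub_zero,
      ENNReal.toReal_ofReal ht0.le]
  rw [integral_add hint hreflint, hrefl, hconst] at hmono
  linarith

lemma key_B (r : ℝ) (hr : 0 < r) (h : ℝ → ℝ) (hh_meas : Measurable h)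
    (hh_nonneg : ∀ s : ℝ, 0 ≤ s → s ≤ r → 0 ≤ h s)
    (hh_int : IntegrableOn h (Ioo 0 r))
    (hA : ∀ t ∈ Ioo (0:ℝ) r, t * h t ≤ 2 * ∫ s in Ioo 0 t, h s)
    (a : ℝ) (ha0 : 0 < a) (har : a < r) :
    (∫ s in Ioo (0:ℝ) r, h s) * a^2 ≤ (∫ s in Ioo (0:ℝ) a, h s) * r^2 := by
  set H : ℝ → ℝ := fun t => ∫ s in Ioo (0:ℝ) t, h s with hH
  set μ1 := volume.restrict (Ioo a r) with hμ1
  set μ2 := volume.restrict (Ioo (0:ℝ) r) with hμ2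
  set F : ℝ × ℝ → ℝ := fun p => if p.2 < p.1 then 2/p.1^3 * h p.2 else 0 with hFdef
  -- integrability of coefficient
  have hcoef_int : IntegrableOn (fun t : ℝ => 2/t^3) (Ioo a r) := by
    apply (ContinuousOn.integrableOn_Icc ?_).mono_set Ioo_subset_Icc_self
    intro t ht
    have ht0 : (0:ℝ) < t := lt_of_lt_of_le ha0 ht.1
    exact (continuousWithinAt_const.div (continuousWithinAt_id.pow 3)
      (pow_ne_zero 3 ht0.ne'))
  -- product integrability
  have hF_int : Integrable F (μ1.prod μ2) := by
    have hprod : Integrable (fun p : ℝ × ℝ => (2/p.1^3) * h p.2) (μ1.prod μ2) :=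
      Integrable.mul_prod hcoef_int hh_int
    have hmeasA : MeasurableSet {p : ℝ × ℝ | p.2 < p.1} :=
      measurableSet_lt measurable_snd measurable_fst
    have : F = ({p : ℝ × ℝ | p.2 < p.1}).indicator (fun p => (2/p.1^3) * h p.2) := by
      funext p
      by_cases hp : p.2 < p.1 <;> simp [hFdef, hp, indicator]
    rw [this]
    exact hprod.indicator hmeasA
  -- swap
  have hswap : (∫ t, (∫ s, F (t, s) ∂μ2) ∂μ1) = ∫ s, (∫ t, F (t, s) ∂μ1) ∂μ2 :=
    integral_integral_swap (f := fun t s => F (t, s)) hF_int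
  -- inner value over s, for fixed t ∈ Ioo a r
  have hMval : ∀ t ∈ Ioo a r, (∫ s, F (t, s) ∂μ2) = 2/t^3 * H t := by
    intro t ht
    have h1 : ∀ s : ℝ, F (t, s) = (Iio t).indicator (fun s => 2/t^3 * h s) s := by
      intro s
      by_cases hs : s < t <;> simp [hFdef, hs, indicator, mem_Iio]
    calc (∫ s, F (t, s) ∂μ2) = ∫ s, (Iio t).indicator (fun s => 2/t^3 * h s) s ∂μ2 := by
          simp_rw [h1]
      _ = ∫ s in Iio t ∩ Ioo 0 r, 2/t^3 * h s := by
          rw [hμ2, integral_indicator measurableSet_Iio, Measure.restrict_restrict measurableSet_Iio]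
      _ = ∫ s in Ioo 0 t, 2/t^3 * h s := by
          congr 1
          rw [Iio_inter_Ioo, min_eq_left ht.2.le]
      _ = 2/t^3 * H t := by rw [integral_const_mul]
  -- auxiliary integrability
  have aux : ∀ (S : Set ℝ), MeasurableSet S → S ⊆ Ioo 0 r → ∀ (c : ℝ → ℝ), Measurable c →
      ∀ K : ℝ, (∀ x ∈ S, |c x| ≤ K) → IntegrableOn (fun s => c s * h s) S := by
    intro S hS hsub c hc K hK
    apply Integrable.mono' (((hh_int.mono_set hsub).norm.const_mul K))
      ((hc.mul hh_meas).aestronglyMeasurable)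
    filter_upwards [ae_restrict_mem hS] with x hx
    calc ‖c x * h x‖ = |c x| * ‖h x‖ := by rw [norm_mul]; rfl
      _ ≤ K * ‖h x‖ := by
          apply mul_le_mul_of_nonneg_right (hK x hx) (norm_nonneg _)
  have hIooar : Ioo a r ⊆ Ioo 0 r := Ioo_subset_Ioo ha0.le le_rfl
  -- the t-integral of 2/t^3
  have hC : ∀ m : ℝ, 0 < m → m ≤ r → (∫ t in Ioo m r, 2/t^3) = 1/m^2 - 1/r^2 := by
    intro m hm0 hmr
    have h0uI : (0:ℝ) ∉ Set.uIcc m r := by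
      rw [Set.uIcc_of_le hmr]
      exact fun hmem => absurd hmem.1 (not_le.mpr hm0)
    rw [← integral_Ioc_eq_integral_Ioo, ← intervalIntegral.integral_of_le hmr]
    have hcong : Set.EqOn (fun t : ℝ => 2/t^3) (fun t : ℝ => 2 * t^(-3:ℤ)) (Set.uIcc m r) := by
      intro t ht
      have ht0 : t ≠ 0 := fun hc => h0uI (hc ▸ ht)
      show 2/t^3 = 2 * t^(-3:ℤ)
      rw [zpow_neg, ← zpow_natCast t 3, div_eq_mul_inv]
      norm_num
    rw [intervalIntegral.integral_congr hcong, intervalIntegral.integral_const_mul,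
      integral_zpow (Or.inr ⟨by norm_num, h0uI⟩)]
    have hm : m ≠ 0 := hm0.ne'
    have hrne : r ≠ 0 := hr.ne'
    rw [show (-3:ℤ) + 1 = -2 by norm_num]
    rw [zpow_neg, zpow_neg, ← zpow_natCast r 2, ← zpow_natCast m 2]
    norm_num
    field_simp
    ring
  -- inner value over t, for fixed s ∈ Ioo 0 r
  have hNval : ∀ s ∈ Ioo (0:ℝ) r, (∫ t, F (t, s) ∂μ1) = (1/(max a s)^2 - 1/r^2) * h s := by
    intro s hs
    have h1 : ∀ t : ℝ, F (t, s) = (Ioi s).indicator (fun t => 2/t^3 * h s) t := by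
      intro t
      by_cases hst : s < t <;> simp [hFdef, hst, indicator, mem_Ioi]
    have hmax0 : 0 < max a s := lt_max_of_lt_left ha0
    have hmaxr : max a s ≤ r := max_le har.le hs.2.le
    calc (∫ t, F (t, s) ∂μ1) = ∫ t, (Ioi s).indicator (fun t => 2/t^3 * h s) t ∂μ1 := by
          simp_rw [h1]
      _ = ∫ t in Ioi s ∩ Ioo a r, 2/t^3 * h s := by
          rw [hμ1, integral_indicator measurableSet_Ioi, Measure.restrict_restrict measurableSet_Ioi]
      _ = ∫ t in Ioo (max s a) r, 2/t^3 * h s := by rw [Ioi_inter_Ioo]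
      _ = (∫ t in Ioo (max a s) r, 2/t^3) * h s := by
          rw [max_comm s a, ← integral_mul_const]
      _ = (1/(max a s)^2 - 1/r^2) * h s := by rw [hC _ hmax0 hmaxr]
  -- compute RHS of swap
  have hdisj : Disjoint (Ioo (0:ℝ) a) (Ico a r) := by
    rw [Set.disjoint_left]
    intro x hx hx'
    exact absurd hx' (by simp [not_le.mpr hx.2, not_le, hx.2])
  have hunion : Ioo (0:ℝ) a ∪ Ico a r = Ioo 0 r := Ioo_union_Ico_eq_Ioo ha0 har.le
  have hmeas_c1 : Measurable (fun s : ℝ => 1/(max a s)^2 - 1/r^2) := by fun_prop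
  have hint1 : IntegrableOn (fun s => (1/(max a s)^2 - 1/r^2) * h s) (Ioo 0 a) := by
    apply aux _ measurableSet_Ioo (Ioo_subset_Ioo le_rfl har.le) _ hmeas_c1 (1/a^2)
    intro x hx
    show |1/(max a x)^2 - 1/r^2| ≤ 1/a^2
    rw [max_eq_left hx.2.le]
    have h2 : (0:ℝ) < 1/r^2 := by positivity
    have h3 : 1/r^2 ≤ 1/a^2 := by
      apply one_div_le_one_div_of_le (by positivity)
      nlinarith
    rw [abs_of_nonneg (by linarith)]
    linarith
  have hint2 : IntegrableOn (fun s => (1/(max a s)^2 - 1/r^2) * h s) (Ico a r) := by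
    apply aux _ measurableSet_Ico (fun x hx => ⟨lt_of_lt_of_le ha0 hx.1, hx.2⟩) _ hmeas_c1 (1/a^2)
    intro x hx
    show |1/(max a x)^2 - 1/r^2| ≤ 1/a^2
    rw [max_eq_right hx.1]
    have hx0 : (0:ℝ) < x := lt_of_lt_of_le ha0 hx.1
    have h2 : 1/r^2 ≤ 1/x^2 := by
      apply one_div_le_one_div_of_le (by positivity)
      nlinarith [hx.2]
    have h3 : 1/x^2 ≤ 1/a^2 := by
      apply one_div_le_one_div_of_le (by positivity)
      nlinarith [hx.1]
    have h4 : (0:ℝ) < 1/r^2 := by positivity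
    rw [abs_of_nonneg (by linarith)]
    linarith
  have hRHS : (∫ s, (∫ t, F (t, s) ∂μ1) ∂μ2)
      = (1/a^2 - 1/r^2) * H a + ∫ s in Ioo a r, (1/s^2 - 1/r^2) * h s := by
    calc (∫ s, (∫ t, F (t, s) ∂μ1) ∂μ2)
        = ∫ s in Ioo (0:ℝ) r, (1/(max a s)^2 - 1/r^2) * h s := by
          rw [hμ2]
          exact setIntegral_congr_fun measurableSet_Ioo hNval
      _ = (∫ s in Ioo (0:ℝ) a, (1/(max a s)^2 - 1/r^2) * h s)
          + ∫ s in Ico a r, (1/(max a s)^2 - 1/r^2) * h s := by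
          rw [← hunion, setIntegral_union hdisj measurableSet_Ico hint1 hint2]
      _ = (1/a^2 - 1/r^2) * H a + ∫ s in Ioo a r, (1/s^2 - 1/r^2) * h s := by
          congr 1
          · rw [show (∫ s in Ioo (0:ℝ) a, (1/(max a s)^2 - 1/r^2) * h s)
                = ∫ s in Ioo (0:ℝ) a, (1/a^2 - 1/r^2) * h s from
              setIntegral_congr_fun measurableSet_Ioo
                (fun x hx => by rw [max_eq_left hx.2.le]), integral_const_mul]
          · rw [integral_Ico_eq_integral_Ioo]
            apply setIntegral_congr_fun measurableSet_Ioo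
            intro x hx
            show (1/(max a x)^2 - 1/r^2) * h x = (1/x^2 - 1/r^2) * h x
            rw [max_eq_right hx.1.le]
  -- integrability of (1/t^2) * h on Ioo a r
  have hint_t2 : IntegrableOn (fun t => (1/t^2) * h t) (Ioo a r) := by
    apply aux _ measurableSet_Ioo hIooar _ (by fun_prop) (1/a^2)
    intro x hx
    show |1/x^2| ≤ 1/a^2
    have hx0 : (0:ℝ) < x := lt_trans ha0 hx.1
    rw [abs_of_nonneg (by positivity)]
    apply one_div_le_one_div_of_le (by positivity)
    nlinarith [hx.1]
  -- lower bound comparison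
  have hLB : (∫ t in Ioo a r, (1/t^2) * h t) ≤ ∫ t, (∫ s, F (t, s) ∂μ2) ∂μ1 := by
    rw [hμ1]
    apply setIntegral_mono_on hint_t2 hF_int.integral_prod_left measurableSet_Ioo
    intro t ht
    rw [hMval t ht]
    have hAt := hA t ⟨lt_trans ha0 ht.1, ht.2⟩
    have ht0 : (0:ℝ) < t := lt_trans ha0 ht.1
    have h3 : (0:ℝ) < t^3 := by positivity
    have e1 : 1/t^2 * h t = (t * h t)/t^3 := by
      field_simp
    have e2 : 2/t^3 * H t = (2 * H t)/t^3 := by ring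
    rw [e1, e2]
    exact (div_le_div_iff_of_pos_right h3).mpr hAt
  have hmono_r : (∫ t in Ioo a r, (1/r^2) * h t) ≤ ∫ t in Ioo a r, (1/t^2) * h t := by
    apply setIntegral_mono_on ((hh_int.mono_set hIooar).const_mul _) hint_t2 measurableSet_Ioo
    intro t ht
    have ht0 : (0:ℝ) < t := lt_trans ha0 ht.1
    have hht : 0 ≤ h t := hh_nonneg t ht0.le ht.2.le
    have : 1/r^2 ≤ 1/t^2 := by
      apply one_div_le_one_div_of_le (by positivity)
      nlinarith [ht.2]
    exact mul_le_mul_of_nonneg_right this hht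
  have hsum : H r = H a + ∫ s in Ioo a r, h s := by
    have e : H r = (∫ s in Ioo (0:ℝ) a, h s) + ∫ s in Ico a r, h s := by
      show (∫ s in Ioo (0:ℝ) r, h s) = _
      rw [← hunion, setIntegral_union hdisj measurableSet_Ico
        (hh_int.mono_set (Ioo_subset_Ioo le_rfl har.le))
        (hh_int.mono_set (fun x hx => ⟨lt_of_lt_of_le ha0 hx.1, hx.2⟩))]
    rw [e, integral_Ico_eq_integral_Ioo]
  have hsplit2 : (∫ s in Ioo a r, (1/s^2 - 1/r^2) * h s)
      = (∫ s in Ioo a r, (1/s^2) * h s) - ∫ s in Ioo a r, (1/r^2) * h s := by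
    rw [← integral_sub hint_t2 ((hh_int.mono_set hIooar).const_mul _)]
    congr 1
    funext s
    ring
  have hconst_int : (∫ t in Ioo a r, (1/r^2) * h t) = (1/r^2) * (H r - H a) := by
    rw [integral_const_mul, show (∫ s in Ioo a r, h s) = H r - H a from by linarith [hsum]]
  have key : (1/r^2) * (H r - H a) ≤ (1/a^2 - 1/r^2) * H a := by
    have c1 := hLB
    rw [hswap, hRHS, hsplit2, hconst_int] at c1
    linarith [hmono_r, hconst_int]
  have ha2 : (0:ℝ) < a^2 := by positivity
  have hr2 : (0:ℝ) < r^2 := by positivity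
  have expand := mul_le_mul_of_nonneg_left key (mul_pos ha2 hr2).le
  have e1 : a^2*r^2 * ((1/r^2)*(H r - H a)) = a^2 * (H r - H a) := by
    field_simp <;> ring
  have e2 : a^2*r^2*((1/a^2-1/r^2)*(H a)) = (r^2 - a^2) * H a := by
    field_simp <;> ring
  rw [e1, e2] at expand
  show H r * a^2 ≤ H a * r^2
  nlinarith [expand]

lemma key_C (r : ℝ) (hr : 0 < r) (g φ : ℝ → ℝ)
    (hg_cont : ContinuousOn g (Ioc 0 r))
    (hg_mono : ∀ s t : ℝ, 0 < s → s ≤ t → t ≤ r → g t ≤ g s)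
    (hφ_meas : Measurable φ)
    (hφ_int : IntegrableOn φ (Ioo 0 r))
    (hφg_int : IntegrableOn (fun s => φ s * g s) (Ioo 0 r))
    (hΦ : ∀ t : ℝ, 0 < t → t ≤ r → 0 ≤ ∫ s in Ioo 0 t, φ s)
    (hΦr : (∫ s in Ioo (0:ℝ) r, φ s) = 0)
    (hdom : IntegrableOn (fun s => |φ s| * (|g s| + |g r|)) (Ioo 0 r)) :
    0 ≤ ∫ s in Ioo (0:ℝ) r, φ s * g s := by
  -- the key epsilon-level inequality
  have keyeps : ∀ ε : ℝ, 0 < ε → ε < r →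
      -(∫ s in Ioo (0:ℝ) ε, |φ s| * (|g s| + |g r|)) ≤ ∫ s in Ioo ε r, φ s * g s := by
    intro ε hε0 hεr
    -- clamp function and Stieltjes function
    set cl : ℝ → ℝ := fun x => min (max x ε) r with hcl
    have hcl_mem : ∀ x, cl x ∈ Icc ε r := by
      intro x
      constructor
      · exact le_min (le_max_right x ε) hεr.le
      · exact min_le_right _ r
    have hcl_mono : Monotone cl := fun x y hxy =>
      min_le_min (max_le_max hxy le_rfl) le_rfl
    have hcl_cont : Continuous cl := (continuous_id.max continuous_const).min continuous_const
    have hIccsub : Icc ε r ⊆ Ioc 0 r := fun x hx => ⟨lt_of_lt_of_le hε0 hx.1, hx.2⟩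
    have hgecl : Continuous (fun x => -g (cl x)) := by
      apply Continuous.neg
      exact (hg_cont.mono hIccsub).comp_continuous hcl_cont hcl_mem
    set f : StieltjesFunction ℝ :=
      { toFun := fun x => -g (cl x)
        mono' := by
          intro x y hxy
          simp only [neg_le_neg_iff]
          exact hg_mono (cl x) (cl y) (lt_of_lt_of_le hε0 (hcl_mem x).1)
            (hcl_mono hxy) (hcl_mem y).2
        right_continuous' := fun x => hgecl.continuousWithinAt } with hf
    have hfval : ∀ x ∈ Icc ε r, f x = -g x := by
      intro x hx
      show -g ((x ⊔ ε) ⊓ r) = -g x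
      rw [max_eq_left hx.1, min_eq_left hx.2]
    have hbot : Tendsto f atBot (𝓝 (-g ε)) := by
      apply Tendsto.congr' _ (tendsto_const_nhds (x := -g ε))
      filter_upwards [eventually_le_atBot ε] with x hx
      show -g ε = -g ((x ⊔ ε) ⊓ r)
      rw [max_eq_right hx, min_eq_left hεr.le]
    have htop : Tendsto f atTop (𝓝 (-g r)) := by
      apply Tendsto.congr' _ (tendsto_const_nhds (x := -g r))
      filter_upwards [eventually_ge_atTop r] with x hx
      show -g r = -g ((x ⊔ ε) ⊓ r)
      rw [max_eq_left (hεr.le.trans hx), min_eq_right hx]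
    set ν := f.measure with hν
    haveI : IsFiniteMeasure ν := f.isFiniteMeasure hbot htop
    have hgmono' : ∀ x ∈ Icc ε r, g r ≤ g x ∧ g x ≤ g ε := by
      intro x hx
      exact ⟨hg_mono x r (lt_of_lt_of_le hε0 hx.1) hx.2 le_rfl,
        hg_mono ε x hε0 hx.1 (hx.2)⟩
    have hν_Iic : ∀ x, ν (Iic x) = ENNReal.ofReal (f x + g ε) := by
      intro x
      rw [hν, f.measure_Iic hbot x]
      ring_nf
    have hν_univ : ν univ = ENNReal.ofReal (g ε - g r) := by
      rw [hν, f.measure_univ hbot htop]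
      ring_nf
    have hν_Ioi : ∀ x ∈ Icc ε r, ν (Ioi x) = ENNReal.ofReal (g x - g r) := by
      intro x hx
      have h1 : ν (Ioi x) = ν univ - ν (Iic x) := by
        rw [← compl_Iic]
        exact measure_compl measurableSet_Iic (measure_ne_top ν _)
      rw [h1, hν_univ, hν_Iic, hfval x hx]
      rw [show -g x + g ε = g ε - g x by ring]
      rw [← ENNReal.ofReal_sub _ (by linarith [(hgmono' x hx).2])]
      congr 1
      ring
    have hν_Iicε : ν (Iic ε) = 0 := by
      rw [hν_Iic, hfval ε ⟨le_rfl, hεr.le⟩, show -g ε + g ε = 0 by ring,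
        ENNReal.ofReal_zero]
    have hν_Ioir : ν (Ioi r) = 0 := by
      rw [hν_Ioi r ⟨hεr.le, le_rfl⟩, sub_self, ENNReal.ofReal_zero]
    have hae : ∀ᵐ t ∂ν, t ∈ Ioc ε r := by
      rw [ae_iff]
      have hset : {t : ℝ | ¬ t ∈ Ioc ε r} = Iic ε ∪ Ioi r := by
        ext t
        simp only [mem_Ioc, not_and_or, not_lt, not_le, mem_union, mem_setOf_eq,
          mem_Iic, mem_Ioi]
      rw [hset]
      apply le_antisymm _ zero_le
      apply le_trans (measure_union_le _ _)
      rw [hν_Iicε, hν_Ioir]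
      simp
    set μ := volume.restrict (Ioo ε r) with hμ
    set Φ : ℝ → ℝ := fun t => ∫ s in Ioo (0:ℝ) t, φ s with hΦdef
    have hIoosub : Ioo ε r ⊆ Ioo 0 r := Ioo_subset_Ioo hε0.le le_rfl
    have hφ_int' : IntegrableOn φ (Ioo ε r) := hφ_int.mono_set hIoosub
    have hsplit : ∀ t, ε < t → t ≤ r → (∫ s in Ioo ε t, φ s) = Φ t - Φ ε := by
      intro t hεt htr
      have hu : Ioo (0:ℝ) ε ∪ Ico ε t = Ioo 0 t := Ioo_union_Ico_eq_Ioo hε0 hεt.le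
      have hd : Disjoint (Ioo (0:ℝ) ε) (Ico ε t) := by
        rw [Set.disjoint_left]
        intro x hx hx'
        exact absurd hx'.1 (not_le.mpr hx.2)
      have heq : Φ t = Φ ε + ∫ s in Ico ε t, φ s := by
        show (∫ s in Ioo (0:ℝ) t, φ s) = _
        rw [← hu, setIntegral_union hd measurableSet_Ico
          (hφ_int.mono_set (Ioo_subset_Ioo le_rfl hεr.le))
          (hφ_int.mono_set (fun x hx => ⟨lt_of_lt_of_le hε0 hx.1, lt_of_lt_of_le hx.2 htr⟩))]
      rw [integral_Ico_eq_integral_Ioo] at heq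
      linarith
    have hg_aesm : AEStronglyMeasurable g μ :=
      (hg_cont.mono (fun x hx => ⟨lt_trans hε0 hx.1, hx.2.le⟩)).aestronglyMeasurable
        measurableSet_Ioo
    have hgbd : ∀ x, 0 < x → x ≤ ε → |g ε| ≤ |g x| + |g r| := by
      intro x hx0 hxε
      have h1 : g r ≤ g ε := hg_mono ε r hε0 hεr.le le_rfl
      have h2 : g ε ≤ g x := hg_mono x ε hx0 hxε hεr.le
      rcases le_or_gt 0 (g ε) with hc | hc
      · rw [abs_of_nonneg hc]
        have : g ε ≤ |g x| := le_trans h2 (le_abs_self _)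
        linarith [abs_nonneg (g r)]
      · rw [abs_of_neg hc]
        have : -g ε ≤ |g r| := le_trans (by linarith) (neg_le_abs _)
        linarith [abs_nonneg (g x)]
    -- Fubini setup
    set F : ℝ × ℝ → ℝ := fun p => if p.1 < p.2 then φ p.1 else 0 with hF
    have hF_int : Integrable F (μ.prod ν) := by
      have h1 : Integrable (fun p : ℝ × ℝ => φ p.1 * (fun _ : ℝ => (1:ℝ)) p.2) (μ.prod ν) :=
        hφ_int'.mul_prod (integrable_const 1)
      have hA : MeasurableSet {p : ℝ × ℝ | p.1 < p.2} :=
        measurableSet_lt measurable_fst measurable_snd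
      have hFeq : F = ({p : ℝ × ℝ | p.1 < p.2}).indicator (fun p => φ p.1) := by
        funext p
        by_cases hp : p.1 < p.2 <;> simp [hF, hp, indicator]
      rw [hFeq]
      have h1' : Integrable (fun p : ℝ × ℝ => φ p.1) (μ.prod ν) := by simpa using h1
      exact h1'.indicator hA
    have hswapC := integral_integral_swap (f := fun s t => F (s, t)) hF_int
    -- LHS value
    have hLHSval : (∫ s, (∫ t, F (s, t) ∂ν) ∂μ) = ∫ s in Ioo ε r, φ s * (g s - g r) := by
      rw [hμ]
      apply setIntegral_congr_fun measurableSet_Ioo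
      intro s hs
      have h1 : ∀ t, F (s, t) = (Ioi s).indicator (fun _ => φ s) t := by
        intro t
        by_cases hst : s < t <;> simp [hF, hst, indicator, mem_Ioi]
      have h2 : g r ≤ g s := hg_mono s r (lt_trans hε0 hs.1) hs.2.le le_rfl
      calc (∫ t, F (s, t) ∂ν) = ∫ t, (Ioi s).indicator (fun _ => φ s) t ∂ν := by
            simp_rw [h1]
        _ = (ν (Ioi s)).toReal • φ s := integral_indicator_const _ measurableSet_Ioi
        _ = φ s * (g s - g r) := by
            rw [hν_Ioi s ⟨hs.1.le, hs.2.le⟩, ENNReal.toReal_ofReal (by linarith),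
              smul_eq_mul, mul_comm]
    -- RHS lower bound
    have hinner_int : Integrable (fun t => ∫ s, F (s, t) ∂μ) ν := hF_int.integral_prod_right
    have hRHS_lb : (ν univ).toReal • (-(Φ ε)) ≤ ∫ t, (∫ s, F (s, t) ∂μ) ∂ν := by
      rw [← measureReal_def, ← integral_const (μ := ν) (-(Φ ε))]
      apply integral_mono_ae (integrable_const _) hinner_int
      filter_upwards [hae] with t ht
      have hval : (∫ s, F (s, t) ∂μ) = Φ t - Φ ε := by
        have h1 : ∀ s, F (s, t) = (Iio t).indicator φ s := by
          intro s
          by_cases hst : s < t <;> simp [hF, hst, indicator, mem_Iio]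
        calc (∫ s, F (s, t) ∂μ) = ∫ s, (Iio t).indicator φ s ∂μ := by simp_rw [h1]
          _ = ∫ s in Iio t ∩ Ioo ε r, φ s := by
              rw [hμ, integral_indicator measurableSet_Iio,
                Measure.restrict_restrict measurableSet_Iio]
          _ = ∫ s in Ioo ε t, φ s := by
              rw [Iio_inter_Ioo, min_eq_left ht.2]
          _ = Φ t - Φ ε := hsplit t ht.1 ht.2
      rw [hval]
      have := hΦ t (lt_trans hε0 ht.1) ht.2
      linarith
    -- combine bound
    have hstep : -(Φ ε) * (g ε - g r) ≤ ∫ s in Ioo ε r, φ s * (g s - g r) := by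
      rw [hν_univ, ENNReal.toReal_ofReal
        (by linarith [hg_mono ε r hε0 hεr.le le_rfl])] at hRHS_lb
      rw [← hLHSval, hswapC]
      calc -(Φ ε) * (g ε - g r) = (g ε - g r) • (-(Φ ε)) := by
            rw [smul_eq_mul]; ring
        _ ≤ _ := hRHS_lb
    -- expand
    have hexp : (∫ s in Ioo ε r, φ s * (g s - g r))
        = (∫ s in Ioo ε r, φ s * g s) - g r * ∫ s in Ioo ε r, φ s := by
      have heq2 : (∫ s in Ioo ε r, φ s * (g s - g r))
          = ∫ s in Ioo ε r, (φ s * g s - g r * φ s) := by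
        congr 1
        funext s
        ring
      rw [heq2, integral_sub (hφg_int.mono_set hIoosub) (hφ_int'.const_mul _),
        integral_const_mul]
    have hΦεr : (∫ s in Ioo ε r, φ s) = - Φ ε := by
      have h1 := hsplit r hεr le_rfl
      have h2 : Φ r = 0 := hΦr
      rw [h2] at h1
      linarith
    -- bound Φ ε * g ε
    have hgεbound : Φ ε * g ε ≤ ∫ s in Ioo (0:ℝ) ε, |φ s| * (|g s| + |g r|) := by
      have habs_int : IntegrableOn (fun s => |φ s| * |g ε|) (Ioo 0 ε) :=
        ((hφ_int.mono_set (Ioo_subset_Ioo le_rfl hεr.le)).norm.mul_const (|g ε|))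
      calc Φ ε * g ε ≤ |Φ ε * g ε| := le_abs_self _
        _ = |Φ ε| * |g ε| := abs_mul _ _
        _ ≤ (∫ s in Ioo (0:ℝ) ε, |φ s|) * |g ε| := by
            apply mul_le_mul_of_nonneg_right _ (abs_nonneg _)
            simpa [Real.norm_eq_abs] using
              norm_integral_le_integral_norm (μ := volume.restrict (Ioo (0:ℝ) ε)) φ
        _ = ∫ s in Ioo (0:ℝ) ε, |φ s| * |g ε| := by rw [integral_mul_const]
        _ ≤ ∫ s in Ioo (0:ℝ) ε, |φ s| * (|g s| + |g r|) := by
            apply setIntegral_mono_on habs_int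
              (hdom.mono_set (Ioo_subset_Ioo le_rfl hεr.le)) measurableSet_Ioo
            intro x hx
            exact mul_le_mul_of_nonneg_left (hgbd x hx.1 hx.2.le) (abs_nonneg _)
    have hgoal : (∫ s in Ioo ε r, φ s * g s) = ∫ s, φ s * g s ∂μ := by rw [hμ]
    have e5 : g r * (∫ s in Ioo ε r, φ s) = -(g r * Φ ε) := by rw [hΦεr]; ring
    have e6 : -Φ ε * (g ε - g r) = -(Φ ε * g ε) + g r * Φ ε := by ring
    linarith [hstep, hexp, hgεbound, hgoal, e5, e6]
  -- now take the limit along ε = r / (n+2)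
  set e : ℕ → ℝ := fun n => r / (n + 2) with he
  have he0 : ∀ n, 0 < e n := fun n => by positivity
  have her : ∀ n, e n < r := by
    intro n
    rw [he]
    rw [div_lt_iff₀ (by positivity)]
    nlinarith [hr]
  have hmono : Monotone (fun n => Ioo (e n) r) := by
    intro m n hmn
    apply Ioo_subset_Ioo _ le_rfl
    apply div_le_div_of_nonneg_left hr.le (by positivity)
    have : (m:ℝ) ≤ n := Nat.cast_le.mpr hmn
    linarith
  have hunion : (⋃ n, Ioo (e n) r) = Ioo (0:ℝ) r := by
    apply subset_antisymm
    · exact iUnion_subset fun n => Ioo_subset_Ioo (he0 n).le le_rfl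
    · intro x hx
      obtain ⟨n, hn⟩ := exists_nat_gt (r / x)
      refine mem_iUnion.mpr ⟨n, ?_, hx.2⟩
      rw [he, div_lt_iff₀ (by positivity)]
      have h1 : r / x < n := hn
      rw [div_lt_iff₀ hx.1] at h1
      nlinarith [hx.1]
  have hlim1 : Tendsto (fun n => ∫ s in Ioo (e n) r, φ s * g s) atTop
      (𝓝 (∫ s in Ioo (0:ℝ) r, φ s * g s)) := by
    have := tendsto_setIntegral_of_monotone (fun n => measurableSet_Ioo) hmono
      (hunion ▸ hφg_int)
    rwa [hunion] at this
  have hlim2 : Tendsto (fun n => ∫ s in Ioo (0:ℝ) (e n), |φ s| * (|g s| + |g r|)) atTop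
      (𝓝 0) := by
    have heq : ∀ n, (∫ s in Ioo (0:ℝ) (e n), |φ s| * (|g s| + |g r|))
        = ∫ s in Ioo (0:ℝ) r, (Ioo (0:ℝ) (e n)).indicator
            (fun s => |φ s| * (|g s| + |g r|)) s := by
      intro n
      rw [integral_indicator measurableSet_Ioo, Measure.restrict_restrict measurableSet_Ioo,
        inter_eq_self_of_subset_left (Ioo_subset_Ioo le_rfl (her n).le)]
    have key := tendsto_integral_of_dominated_convergence
      (F := fun n => (Ioo (0:ℝ) (e n)).indicator (fun s => |φ s| * (|g s| + |g r|)))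
      (f := fun _ => (0:ℝ)) (bound := fun s => |φ s| * (|g s| + |g r|))
      (μ := volume.restrict (Ioo (0:ℝ) r))
      (fun n => ((hdom.aestronglyMeasurable).indicator measurableSet_Ioo))
      hdom ?_ ?_
    · have : (∫ s in Ioo (0:ℝ) r, (0:ℝ)) = 0 := by simp
      rw [this] at key
      exact Tendsto.congr (fun n => (heq n).symm) key
    · intro n
      filter_upwards with s
      rw [norm_indicator_eq_indicator_norm]
      apply (indicator_le_self' (fun x _ => norm_nonneg _) s).trans
      rw [Real.norm_eq_abs, abs_of_nonneg (by positivity)]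
    · filter_upwards [ae_restrict_mem measurableSet_Ioo] with s hs
      have hev : ∀ᶠ n in atTop, (Ioo (0:ℝ) (e n)).indicator
          (fun s => |φ s| * (|g s| + |g r|)) s = 0 := by
        obtain ⟨n₀, hn₀⟩ := exists_nat_gt (r / s)
        filter_upwards [eventually_ge_atTop n₀] with n hn
        apply indicator_of_notMem
        intro hmem
        have hs0 : (0:ℝ) < s := hs.1
        have h2 : e n ≤ r/(n₀+2) := by
          rw [he]
          apply div_le_div_of_nonneg_left hr.le (by positivity)
          have : (n₀:ℝ) ≤ n := Nat.cast_le.mpr hn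
          linarith
        have h3 : s < r/((n₀:ℝ)+2) := lt_of_lt_of_le hmem.2 h2
        rw [lt_div_iff₀ (by positivity)] at h3
        rw [div_lt_iff₀ hs0] at hn₀
        nlinarith [hs0]
      exact Tendsto.congr' (hev.mono fun n hn => hn.symm) tendsto_const_nhds
  -- combine
  have hcomb : ∀ n, (0:ℝ) ≤ (∫ s in Ioo (e n) r, φ s * g s)
      + ∫ s in Ioo (0:ℝ) (e n), |φ s| * (|g s| + |g r|) := by
    intro n
    have := keyeps (e n) (he0 n) (her n)
    linarith
  have := hlim1.add hlim2
  rw [add_zero] at this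
  exact ge_of_tendsto' this hcomb

/-- Let `r > 0`, let `g : (0,r] → ℝ` be continuous and
non-increasing with `s ↦ s g(s)` integrable on `(0,r)` and `∫₀^r s g(s) ds ≥ 0`,
and let `h : [0,r] → [0,∞)` be measurable with `h(0) = 0`, with `h` and `h·|g|`
integrable on `(0,r)`, and subadditive: `h(s₁+s₂) ≤ h(s₁) + h(s₂)` for
`s₁, s₂ > 0` with `s₁ + s₂ < r`.  Then `∫₀^r h(s) g(s) ds ≥ 0`. -/
theorem stmt_14 (r : ℝ) (hr : 0 < r) (g h : ℝ → ℝ)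
    (hg_cont : ContinuousOn g (Ioc 0 r))
    (hg_mono : ∀ s t : ℝ, 0 < s → s ≤ t → t ≤ r → g t ≤ g s)
    (hg_int : IntegrableOn (fun s => s * g s) (Ioo 0 r))
    (hg_nonneg : 0 ≤ ∫ s in Ioo (0:ℝ) r, s * g s)
    (hh_meas : Measurable h)
    (hh0 : h 0 = 0)
    (hh_nonneg : ∀ s : ℝ, 0 ≤ s → s ≤ r → 0 ≤ h s)
    (hh_int : IntegrableOn h (Ioo 0 r))
    (hhg_int : IntegrableOn (fun s => h s * |g s|) (Ioo 0 r))
    (hh_subadd : ∀ s₁ s₂ : ℝ, 0 < s₁ → 0 < s₂ → s₁ + s₂ < r →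
      h (s₁ + s₂) ≤ h s₁ + h s₂) :
    0 ≤ ∫ s in Ioo (0:ℝ) r, h s * g s := by
  have hA := key_A r h hh_int hh_subadd
  set H : ℝ → ℝ := fun t => ∫ s in Ioo (0:ℝ) t, h s with hH
  have hHr_nonneg : 0 ≤ H r := by
    apply setIntegral_nonneg measurableSet_Ioo
    intro x hx
    exact hh_nonneg x hx.1.le hx.2.le
  set lam : ℝ := 2 * H r / r^2 with hlam
  have hlam_nonneg : 0 ≤ lam := by positivity
  set φ : ℝ → ℝ := fun s => h s - lam * s with hφ
  -- B for all 0 < t ≤ r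
  have hB : ∀ t : ℝ, 0 < t → t ≤ r → H r * t^2 ≤ H t * r^2 := by
    intro t ht0 htr
    rcases eq_or_lt_of_le htr with hteq | htlt
    · rw [hteq]
    · exact key_B r hr h hh_meas hh_nonneg hh_int hA t ht0 htlt
  -- linear function integrable on subintervals, with value
  have hid_int : ∀ t : ℝ, 0 < t → t ≤ r → IntegrableOn (fun s : ℝ => s) (Ioo 0 t) := by
    intro t ht0 htr
    exact (continuous_id.integrableOn_Icc).mono_set Ioo_subset_Icc_self
  have hid_val : ∀ t : ℝ, 0 < t → (∫ s in Ioo (0:ℝ) t, s) = t^2/2 := by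
    intro t ht0
    rw [← integral_Ioc_eq_integral_Ioo, ← intervalIntegral.integral_of_le ht0.le,
      integral_id]
    ring
  -- measurability of g on restricted measures
  have hg_aesm : AEStronglyMeasurable g (volume.restrict (Ioo 0 r)) :=
    (hg_cont.mono Ioo_subset_Ioc_self).aestronglyMeasurable measurableSet_Ioo
  -- h * g integrable
  have hhg_int' : IntegrableOn (fun s => h s * g s) (Ioo 0 r) := by
    apply Integrable.mono' hhg_int (hh_meas.aestronglyMeasurable.mul hg_aesm)
    filter_upwards [ae_restrict_mem measurableSet_Ioo] with x hx
    show ‖h x * g x‖ ≤ h x * |g x|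
    rw [Real.norm_eq_abs, abs_mul, abs_of_nonneg (hh_nonneg x hx.1.le hx.2.le)]
  -- φ integrable
  have hφ_int : IntegrableOn φ (Ioo 0 r) :=
    hh_int.sub ((hid_int r hr le_rfl).const_mul lam)
  -- φ * g integrable
  have hφg_int : IntegrableOn (fun s => φ s * g s) (Ioo 0 r) := by
    have heq : (fun s => φ s * g s) = fun s => h s * g s - lam * (s * g s) := by
      funext s
      show (h s - lam * s) * g s = _
      ring
    rw [heq]
    exact hhg_int'.sub (hg_int.const_mul lam)
  -- Φ values
  have hΦval : ∀ t : ℝ, 0 < t → t ≤ r →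
      (∫ s in Ioo (0:ℝ) t, φ s) = H t - lam * (t^2/2) := by
    intro t ht0 htr
    show (∫ s in Ioo (0:ℝ) t, (h s - lam * s)) = _
    rw [integral_sub (hh_int.mono_set (Ioo_subset_Ioo le_rfl htr)) ((hid_int t ht0 htr).const_mul lam),
      integral_const_mul, hid_val t ht0]
  have hΦnonneg : ∀ t : ℝ, 0 < t → t ≤ r → 0 ≤ ∫ s in Ioo (0:ℝ) t, φ s := by
    intro t ht0 htr
    rw [hΦval t ht0 htr]
    have hBt := hB t ht0 htr
    have hr2 : (0:ℝ) < r^2 := by positivity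
    have : lam * (t^2/2) = (H r * t^2)/r^2 := by
      rw [hlam]
      field_simp
    rw [this, sub_nonneg, div_le_iff₀ hr2]
    linarith [hBt]
  have hΦr0 : (∫ s in Ioo (0:ℝ) r, φ s) = 0 := by
    rw [hΦval r hr le_rfl, hlam]
    field_simp
    ring
  -- domination integrand
  have hdom : IntegrableOn (fun s => |φ s| * (|g s| + |g r|)) (Ioo 0 r) := by
    have hG : IntegrableOn (fun s => h s * |g s| + h s * |g r|
        + lam * |s * g s| + (lam * |g r|) * s) (Ioo 0 r) :=
      ((hhg_int.add (hh_int.mul_const _)).add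
        (IntegrableOn.congr_fun (hg_int.norm.const_mul lam) ?_ measurableSet_Ioo)).add
        ((hid_int r hr le_rfl).const_mul _)
    swap
    · intro x _
      show lam * ‖x * g x‖ = lam * |x * g x|
      rw [Real.norm_eq_abs]
    apply Integrable.mono' hG ?_
    · filter_upwards [ae_restrict_mem measurableSet_Ioo] with x hx
      have hx0 : 0 < x := hx.1
      have hhx : 0 ≤ h x := hh_nonneg x hx0.le hx.2.le
      have habs : |φ x| ≤ h x + lam * x := by
        show |h x - lam * x| ≤ _
        rw [abs_sub_le_iff]
        constructor
        · nlinarith [hlam_nonneg, hx0]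
        · nlinarith [hlam_nonneg, hx0, hhx]
      have h2 : |x * g x| = x * |g x| := by
        rw [abs_mul, abs_of_pos hx0]
      show ‖|φ x| * (|g x| + |g r|)‖ ≤ h x * |g x| + h x * |g r| + lam * |x * g x| + (lam * |g r|) * x
      rw [Real.norm_eq_abs, abs_of_nonneg (by positivity)]
      have h3 : (0:ℝ) ≤ |g x| + |g r| := by positivity
      calc |φ x| * (|g x| + |g r|) ≤ (h x + lam * x) * (|g x| + |g r|) :=
            mul_le_mul_of_nonneg_right habs h3
        _ = h x * |g x| + h x * |g r| + lam * (x * |g x|) + (lam * |g r|) * x := by ring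
        _ = h x * |g x| + h x * |g r| + lam * |x * g x| + (lam * |g r|) * x := by rw [h2]
    · apply AEStronglyMeasurable.mul
      · exact ((hh_meas.sub (measurable_const.mul measurable_id)).abs).aestronglyMeasurable
      · have : (fun s => |g s| + |g r|) = fun s => ‖g s‖ + ‖g r‖ := by
          funext s
          rw [Real.norm_eq_abs, Real.norm_eq_abs]
        rw [this]
        exact hg_aesm.norm.add aestronglyMeasurable_const
  -- apply key_C
  have hφ_meas : Measurable φ := hh_meas.sub (measurable_const.mul measurable_id)
  have hmain := key_C r hr g φ hg_cont hg_mono hφ_meas hφ_int hφg_int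
    (fun t ht0 htr => hΦnonneg t ht0 htr) hΦr0 hdom
  -- conclude
  have hfin : (∫ s in Ioo (0:ℝ) r, h s * g s)
      = (∫ s in Ioo (0:ℝ) r, φ s * g s) + lam * ∫ s in Ioo (0:ℝ) r, s * g s := by
    rw [← integral_const_mul, ← integral_add hφg_int (hg_int.const_mul lam)]
    congr 1
    funext s
    show h s * g s = (h s - lam * s) * g s + lam * (s * g s)
    ring
  rw [hfin]
  have : 0 ≤ lam * ∫ s in Ioo (0:ℝ) r, s * g s := mul_nonneg hlam_nonneg hg_nonneg
  linarith [hmain]
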